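/- Let j ≥ 1 and let G be a graph whose vertex set partitions into D = {a,b,c,d,e} and a nonempty set R with |R| = j such that: the edges inside D are exactly ae, bc, bd, ce, de (so D induces the graph F_4, the complement of F_5); every vertex of R is adjacent to each of c, d, e and to neither a nor b; and the edges inside R are arbitrary. Then G is not L-integral. -/
import Mathlib


open SimpleGraph Polynomial

/-- A finite simple graph is `L`-integral if every eigenvalue of its Laplacian
matrix (over `ℝ`) is an integer. -/
def LIntegral {V : Type*} [Fintype V] [DecidableEq V] (G : SimpleGraph V)
    [DecidableRel G.Adj] : Prop :=
  ∀ μ ∈ spectrum ℝ (G.lapMatrix ℝ), ∃ z : ℤ, μ = (z : ℝ)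

/-- The graph obtained from `F₄` (vertices `a,b,c,d,e = 0,1,2,3,4`, edges
`ae, bc, bd, ce, de`; the complement of `F₅`) by adding a nonempty set `R` of
vertices, each adjacent exactly to `c`, `d` and `e`, with the edges inside `R`
given by `H`. -/
def F4Ext (j : ℕ) (H : SimpleGraph (Fin j)) : SimpleGraph (Fin 5 ⊕ Fin j) :=
  SimpleGraph.fromRel (fun u v =>
    (u = Sum.inl 0 ∧ v = Sum.inl 4) ∨ (u = Sum.inl 1 ∧ v = Sum.inl 2) ∨
    (u = Sum.inl 1 ∧ v = Sum.inl 3) ∨ (u = Sum.inl 2 ∧ v = Sum.inl 4) ∨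
    (u = Sum.inl 3 ∧ v = Sum.inl 4) ∨
    (∃ r : Fin j, (u = Sum.inl 2 ∨ u = Sum.inl 3 ∨ u = Sum.inl 4) ∧ v = Sum.inr r) ∨
    (∃ r s : Fin j, H.Adj r s ∧ u = Sum.inr r ∧ v = Sum.inr s))

section Aux

open Finset Matrix

noncomputable instance F4Ext.instDecidableRelAdj (j : ℕ) (H : SimpleGraph (Fin j)) :
    DecidableRel (F4Ext j H).Adj :=
  Classical.decRel _

variable {j : ℕ} {H : SimpleGraph (Fin j)}

lemma F4Ext.adj_inl_inr (i : Fin 5) (r : Fin j) :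
    (F4Ext j H).Adj (Sum.inl i) (Sum.inr r) ↔ (i = 2 ∨ i = 3 ∨ i = 4) := by
  simp [F4Ext, fromRel_adj]

lemma F4Ext.adj_inr_inl (i : Fin 5) (r : Fin j) :
    (F4Ext j H).Adj (Sum.inr r) (Sum.inl i) ↔ (i = 2 ∨ i = 3 ∨ i = 4) := by
  rw [adj_comm]; exact F4Ext.adj_inl_inr i r

lemma F4Ext.adj_inl_inl (i k : Fin 5) :
    (F4Ext j H).Adj (Sum.inl i) (Sum.inl k) ↔
    ((i=0∧k=4)∨(i=1∧k=2)∨(i=1∧k=3)∨(i=2∧k=4)∨(i=3∧k=4)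
    ∨(k=0∧i=4)∨(k=1∧i=2)∨(k=1∧i=3)∨(k=2∧i=4)∨(k=3∧i=4)) := by
  simp only [F4Ext, fromRel_adj]
  fin_cases i <;> fin_cases k <;> simp

/-- The Laplacian acting on a vector, written as a single sum. -/
lemma lap_mulVec_ite {V : Type*} [Fintype V] [DecidableEq V] (G : SimpleGraph V)
    [DecidableRel G.Adj] (x : V → ℝ) (v : V) :
    (G.lapMatrix ℝ *ᵥ x) v = ∑ w, if G.Adj v w then x v - x w else 0 := by
  rw [lapMatrix_mulVec_apply, degree_eq_sum_if_adj, neighborFinset_eq_filter, sum_filter,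
    sum_mul, ← Finset.sum_sub_distrib]
  refine Finset.sum_congr rfl fun w _ => ?_
  split <;> simp

/-- An eigenvector for a matrix witnesses membership of its eigenvalue in the spectrum. -/
lemma mem_spectrum_of_mulVec {n : Type*} [Fintype n] [DecidableEq n]
    (M : Matrix n n ℝ) (t : ℝ) (x : n → ℝ) (hx : x ≠ 0) (h : M *ᵥ x = t • x) :
    t ∈ spectrum ℝ M := by
  rw [spectrum.mem_iff]
  intro hu
  apply hx
  obtain ⟨u, hu⟩ := hu
  have h0 : (↑u : Matrix n n ℝ) *ᵥ x = 0 := by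
    rw [hu, sub_mulVec, h, Matrix.algebraMap_eq_diagonal]
    ext w
    simp [mulVec_diagonal]
  calc x = ((↑u⁻¹ : Matrix n n ℝ) * ↑u) *ᵥ x := by rw [Units.inv_mul, one_mulVec]
  _ = (↑u⁻¹ : Matrix n n ℝ) *ᵥ ((↑u : Matrix n n ℝ) *ᵥ x) := by rw [mulVec_mulVec]
  _ = 0 := by rw [h0, mulVec_zero]

/-- The key quartic polynomial: a factor of the characteristic polynomial of
the Laplacian of `F4Ext j H`, independent of `H`. -/
def Qpoly (jr t : ℝ) : ℝ :=
  t^4 - (2*jr+11)*t^3 + (jr^2+14*jr+42)*t^2 - (3*jr^2+28*jr+64)*t + (2*jr^2+16*jr+30)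

lemma Qpoly_exists_root (jr : ℝ) (h1 : 1 ≤ jr) :
    ∃ t : ℝ, 2 < t ∧ t < 3 ∧ Qpoly jr t = 0 := by
  have hc : Continuous (Qpoly jr) := by unfold Qpoly; fun_prop
  have h2 : Qpoly jr 2 = -2 := by unfold Qpoly; ring
  have h3 : Qpoly jr 3 = 2*jr^2+4*jr := by unfold Qpoly; ring
  have hmem : (0:ℝ) ∈ Set.Icc (Qpoly jr 2) (Qpoly jr 3) := by
    rw [h2, h3]
    constructor <;> nlinarith
  obtain ⟨t, ht, hQt⟩ := intermediate_value_Icc (by norm_num : (2:ℝ) ≤ 3) hc.continuousOn hmem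
  have ht2 : t ≠ 2 := by rintro rfl; rw [h2] at hQt; norm_num at hQt
  have ht3 : t ≠ 3 := by rintro rfl; rw [h3] at hQt; nlinarith
  exact ⟨t, lt_of_le_of_ne ht.1 (Ne.symm ht2), lt_of_le_of_ne ht.2 ht3, hQt⟩

/-- Any root of the quartic in `(2,3)` is an eigenvalue of the Laplacian of `F4Ext j H`. -/
lemma F4Ext_eigen (hj : 1 ≤ j) (t : ℝ) (ht2 : 2 < t) (ht3 : t < 3)
    (hQ0 : Qpoly (j : ℝ) t = 0) :
    ∃ x : Fin 5 ⊕ Fin j → ℝ, x ≠ 0 ∧ (F4Ext j H).lapMatrix ℝ *ᵥ x = t • x := by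
  have hQ : t^4 - (2*(j:ℝ)+11)*t^3 + ((j:ℝ)^2+14*(j:ℝ)+42)*t^2
      - (3*(j:ℝ)^2+28*(j:ℝ)+64)*t + (2*(j:ℝ)^2+16*(j:ℝ)+30) = 0 := hQ0
  set jr : ℝ := (j : ℝ) with hjr
  set K : ℝ := ((3+jr-t)*(3-t)-jr)*(1-t)-(3-t) with hK
  set va : ℝ := 2*(jr+3-t)*(2-t)*(3-t) with hva
  set vb : ℝ := 2*(3-t)*K with hvb
  set vs : ℝ := (2-t)*(3-t)*K with hvs
  set ve : ℝ := (1-t)*va with hve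
  set vR : ℝ := 2*(2-t)*K + 2*(jr+3-t)*(2-t)*(1-t) with hvR
  refine ⟨Sum.elim ![va, vb, vs, vs, ve] (fun _ => vR), ?_, ?_⟩
  · intro hx
    have h0 : va = 0 := by
      have := congrFun hx (Sum.inl 0)
      simpa using this
    rw [hva] at h0
    have h2 : (2:ℝ) - t ≠ 0 := by linarith
    have h3 : (3:ℝ) - t ≠ 0 := by linarith
    have h4 : jr + 3 - t ≠ 0 := by
      have : (0:ℝ) ≤ jr := by positivity
      linarith
    exact (mul_ne_zero (mul_ne_zero (mul_ne_zero two_ne_zero h4) h2) h3) h0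
  · ext v
    rw [lap_mulVec_ite, Fintype.sum_sum_type]
    obtain v | r := v
    · fin_cases v <;>
      [ (skip); (skip); (skip); (skip); (skip)] <;>
        simp only [Fin.sum_univ_five, F4Ext.adj_inl_inl, F4Ext.adj_inl_inr, Sum.elim_inl,
          Sum.elim_inr, Matrix.cons_val_zero, Matrix.cons_val_one, Matrix.head_cons,
          Pi.smul_apply, smul_eq_mul, Finset.sum_const, Finset.card_univ, Fintype.card_fin,
          nsmul_eq_mul] <;>
        simp (config := { decide := true }) <;>
        simp only [← hjr, hvR, hvb, hvs, hve, hva, hK]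
      · ring
      · ring
      · linear_combination (t^2-3*t) * hQ
      · linear_combination (t^2-3*t) * hQ
      · ring
    · simp only [Fin.sum_univ_five, F4Ext.adj_inr_inl, Sum.elim_inl, Sum.elim_inr,
        Matrix.cons_val_zero, Matrix.cons_val_one, Matrix.head_cons, Pi.smul_apply,
        smul_eq_mul, sub_self, ite_self, Finset.sum_const_zero]
      simp (config := { decide := true })
      simp only [← hjr, hvR, hvb, hvs, hve, hva, hK]
      ring

end Aux

open Finset Matrix in
/-- A graph consisting of `F₄` together with a nonempty set of extra vertices, each
adjacent exactly to `c`, `d` and `e`, is not `L`-integral. -/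
theorem F4Ext_not_LIntegral {V : Type*} [Fintype V] [DecidableEq V]
    (G : SimpleGraph V) [DecidableRel G.Adj] (j : ℕ) (hj : 1 ≤ j)
    (H : SimpleGraph (Fin j)) (h : Nonempty (G ≃g F4Ext j H)) :
    ¬ LIntegral G := by
  obtain ⟨e⟩ := h
  have hjr : (1:ℝ) ≤ (j:ℝ) := by exact_mod_cast hj
  obtain ⟨t, ht2, ht3, hQ0⟩ := Qpoly_exists_root (j:ℝ) hjr
  obtain ⟨x, hx0, hxeig⟩ := F4Ext_eigen (H := H) hj t ht2 ht3 hQ0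
  -- transport the eigenvector along the isomorphism
  set y : V → ℝ := fun v => x (e v) with hy
  have hy0 : y ≠ 0 := by
    intro h0
    apply hx0
    ext w
    have := congrFun h0 (e.symm w)
    simpa [hy] using this
  have hyeig : G.lapMatrix ℝ *ᵥ y = t • y := by
    ext v
    rw [lap_mulVec_ite]
    have hx := congrFun hxeig (e v)
    rw [lap_mulVec_ite] at hx
    calc (∑ w, if G.Adj v w then y v - y w else 0)
        = ∑ w, if (F4Ext j H).Adj (e v) w then x (e v) - x w else 0 := by
          refine Fintype.sum_equiv e.toEquiv _ _ fun w => ?_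
          have : G.Adj v w ↔ (F4Ext j H).Adj (e v) (e w) := (e.map_adj_iff).symm
          simp only [hy, RelIso.coe_fn_toEquiv]
          exact if_congr this rfl rfl
      _ = t * x (e v) := by rw [hx]; simp
      _ = (t • y) v := by simp [hy]
  intro hL
  obtain ⟨z, hz⟩ := hL t (mem_spectrum_of_mulVec _ t y hy0 hyeig)
  rw [hz] at ht2 ht3
  have h2 : (2:ℤ) < z := by exact_mod_cast ht2
  have h3 : z < 3 := by exact_mod_cast ht3
  omega
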